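/- Define f : ℝ² → ℝ by f(x₁,x₂) = (x₂ + 5x₁ − 23)² + (x₁² − 9x₁ + 20)² + (x₁x₂ + 22x₁ − 100)². Then f(x) = 0 if and only if (x₁,x₂) ∈ {(5,−2), (4,3)}, yet f possesses a critical point z with ∇f(z) = 0 and f(z) > 0; in particular f is not globally convex and there exists a point where the gradient vanishes but f is positive. -/

import Mathlib

noncomputable def gfun (t : ℝ) : ℝ := (23 + 95 * t - 22 * t ^ 2) / (1 + t ^ 2)

noncomputable def hfun (t : ℝ) : ℝ :=
  10 * (gfun t + 5 * t - 23) + 2 * (2 * t - 9) * (t ^ 2 - 9 * t + 20)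
    + 2 * (gfun t + 22) * (t * gfun t + 22 * t - 100)

lemma gfun_cont : Continuous gfun := by
  apply Continuous.div (by continuity) (by continuity)
  intro t; positivity

lemma hfun_cont : Continuous hfun := by
  unfold hfun
  have hg := gfun_cont
  fun_prop

lemma exists_root : ∃ t ∈ Set.Icc (-113/50 : ℝ) (-9/4 : ℝ), hfun t = 0 := by
  have h1 : hfun (-113/50) < 0 := by unfold hfun gfun; norm_num
  have h2 : 0 < hfun (-9/4) := by unfold hfun gfun; norm_num
  have key := intermediate_value_Icc (by norm_num : (-113/50:ℝ) ≤ -9/4)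
    hfun_cont.continuousOn
  have h0 : (0:ℝ) ∈ Set.Icc (hfun (-113/50)) (hfun (-9/4)) := ⟨le_of_lt h1, le_of_lt h2⟩
  obtain ⟨t, ht, ht0⟩ := key h0
  exact ⟨t, ht, ht0⟩


lemma hasFDerivAt_sq {u : ℝ × ℝ → ℝ} {u' : ℝ × ℝ →L[ℝ] ℝ} {z : ℝ × ℝ}
    (h : HasFDerivAt u u' z) : HasFDerivAt (fun x => u x ^ 2) ((2 * u z) • u') z := by
  have heq : (fun x => u x ^ 2) = fun x => u x * u x := by funext x; ring
  rw [heq, two_mul, add_smul]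
  exact h.mul h

theorem stmt_19 (f : ℝ × ℝ → ℝ)
    (hf : ∀ x : ℝ × ℝ, f x = (x.2 + 5 * x.1 - 23) ^ 2
        + (x.1 ^ 2 - 9 * x.1 + 20) ^ 2 + (x.1 * x.2 + 22 * x.1 - 100) ^ 2) :
    (∀ x : ℝ × ℝ, f x = 0 ↔ x = (5, -2) ∨ x = (4, 3))
    ∧ (∃ z : ℝ × ℝ, fderiv ℝ f z = 0 ∧ 0 < f z)
    ∧ ¬ ConvexOn ℝ Set.univ f := by
  have hfe : f = fun x : ℝ × ℝ => (x.2 + 5 * x.1 - 23) ^ 2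
      + (x.1 ^ 2 - 9 * x.1 + 20) ^ 2 + (x.1 * x.2 + 22 * x.1 - 100) ^ 2 := funext hf
  subst hfe
  refine ⟨?_, ?_, ?_⟩
  · intro x
    constructor
    · intro h
      have h' : (x.2 + 5 * x.1 - 23) ^ 2 + (x.1 ^ 2 - 9 * x.1 + 20) ^ 2
          + (x.1 * x.2 + 22 * x.1 - 100) ^ 2 = 0 := h
      have hB2 : (x.1 ^ 2 - 9 * x.1 + 20) ^ 2 = 0 := by
        nlinarith [sq_nonneg (x.2 + 5 * x.1 - 23), sq_nonneg (x.1 * x.2 + 22 * x.1 - 100),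
          sq_nonneg (x.1 ^ 2 - 9 * x.1 + 20)]
      have hA2 : (x.2 + 5 * x.1 - 23) ^ 2 = 0 := by
        nlinarith [sq_nonneg (x.2 + 5 * x.1 - 23), sq_nonneg (x.1 * x.2 + 22 * x.1 - 100),
          sq_nonneg (x.1 ^ 2 - 9 * x.1 + 20)]
      have hB : x.1 ^ 2 - 9 * x.1 + 20 = 0 :=
        (pow_eq_zero_iff (by norm_num : (2:ℕ) ≠ 0)).mp hB2
      have hA : x.2 + 5 * x.1 - 23 = 0 :=
        (pow_eq_zero_iff (by norm_num : (2:ℕ) ≠ 0)).mp hA2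
      have hfac : (x.1 - 4) * (x.1 - 5) = 0 := by linear_combination hB
      rcases mul_eq_zero.mp hfac with h4 | h5
      · right
        have hx1 : x.1 = 4 := by linarith
        have hx2 : x.2 = 3 := by linarith
        exact Prod.ext_iff.mpr ⟨hx1, hx2⟩
      · left
        have hx1 : x.1 = 5 := by linarith
        have hx2 : x.2 = -2 := by linarith
        exact Prod.ext_iff.mpr ⟨hx1, hx2⟩
    · rintro (rfl | rfl) <;> norm_num
  · obtain ⟨t, ht, ht0⟩ := exists_root
    have hden : (1:ℝ) + t ^ 2 ≠ 0 := by positivity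
    have hgt : gfun t * (1 + t ^ 2) = 23 + 95 * t - 22 * t ^ 2 := by
      unfold gfun; field_simp
    have hq : 2 * (gfun t + 5 * t - 23) + 2 * t * (t * gfun t + 22 * t - 100) = 0 := by
      linear_combination 2 * hgt
    have hp : 10 * (gfun t + 5 * t - 23) + 2 * (2 * t - 9) * (t ^ 2 - 9 * t + 20)
        + 2 * (gfun t + 22) * (t * gfun t + 22 * t - 100) = 0 := ht0
    refine ⟨(t, gfun t), ?_, ?_⟩
    · set z : ℝ × ℝ := (t, gfun t) with hz
      have hA' : HasFDerivAt (fun x : ℝ × ℝ => x.2 + 5 * x.1 - 23)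
          (ContinuousLinearMap.snd ℝ ℝ ℝ + (5:ℝ) • ContinuousLinearMap.fst ℝ ℝ ℝ) z :=
        ((hasFDerivAt_snd.add (hasFDerivAt_fst.const_mul 5)).sub_const 23)
      have hB' : HasFDerivAt (fun x : ℝ × ℝ => x.1 ^ 2 - 9 * x.1 + 20)
          ((2 * z.1) • ContinuousLinearMap.fst ℝ ℝ ℝ
            - (9:ℝ) • ContinuousLinearMap.fst ℝ ℝ ℝ) z :=
        (((hasFDerivAt_sq hasFDerivAt_fst).sub (hasFDerivAt_fst.const_mul 9)).add_const 20)
      have hC' : HasFDerivAt (fun x : ℝ × ℝ => x.1 * x.2 + 22 * x.1 - 100)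
          ((z.1 • ContinuousLinearMap.snd ℝ ℝ ℝ + z.2 • ContinuousLinearMap.fst ℝ ℝ ℝ)
            + (22:ℝ) • ContinuousLinearMap.fst ℝ ℝ ℝ) z :=
        (((hasFDerivAt_fst.mul hasFDerivAt_snd).add (hasFDerivAt_fst.const_mul 22)).sub_const 100)
      have hfd := ((hasFDerivAt_sq hA').add (hasFDerivAt_sq hB')).add (hasFDerivAt_sq hC')
      rw [(show HasFDerivAt (fun x : ℝ × ℝ => (x.2 + 5 * x.1 - 23) ^ 2 + (x.1 ^ 2 - 9 * x.1 + 20) ^ 2 + (x.1 * x.2 + 22 * x.1 - 100) ^ 2) _ z from hfd).fderiv]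
      refine ContinuousLinearMap.ext fun v => ?_
      simp only [ContinuousLinearMap.add_apply, ContinuousLinearMap.sub_apply,
        ContinuousLinearMap.smul_apply, ContinuousLinearMap.coe_fst',
        ContinuousLinearMap.coe_snd', ContinuousLinearMap.zero_apply, smul_eq_mul, hz]
      linear_combination (v.1 : ℝ) * hp + (v.2 : ℝ) * hq
    · have hB : (20:ℝ) ≤ t ^ 2 - 9 * t + 20 := by nlinarith [ht.2, sq_nonneg t]
      have : 0 < (gfun t + 5 * t - 23) ^ 2 + (t ^ 2 - 9 * t + 20) ^ 2
          + (t * gfun t + 22 * t - 100) ^ 2 := by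
        nlinarith [sq_nonneg (gfun t + 5 * t - 23), sq_nonneg (t * gfun t + 22 * t - 100)]
      exact this
  · intro hcv
    have h2 := hcv.2 (Set.mem_univ ((5:ℝ), (-2:ℝ))) (Set.mem_univ ((4:ℝ), (3:ℝ)))
      (by norm_num : (0:ℝ) ≤ 1/2) (by norm_num : (0:ℝ) ≤ 1/2)
      (by norm_num : (1/2:ℝ) + 1/2 = 1)
    simp only [Prod.smul_mk, smul_eq_mul, Prod.mk_add_mk] at h2
    norm_num at h2
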